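/- The quotient ((d + 1) · log((√(1 + (d+1)²) + √(2d + 1)) / √(1 + d²))) / √(2d) tends to 1 as d → +∞ (limit along the filter atTop on the reals). -/

import Mathlib

open Real Filter

private lemma sqrt_tendsto_atTop : Tendsto Real.sqrt atTop atTop := by
  rw [tendsto_atTop_atTop]
  intro b
  refine ⟨max 1 b ^ 2, fun a ha => ?_⟩
  have h1 : (0:ℝ) ≤ max 1 b := le_trans zero_le_one (le_max_left _ _)
  have := Real.sqrt_le_sqrt ha
  rw [Real.sqrt_sq h1] at this
  exact le_trans (le_max_right 1 b) this

private lemma two_div_sqrt_tendsto : Tendsto (fun d : ℝ => 2 / Real.sqrt d) atTop (nhds 0) :=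
  tendsto_const_nhds.div_atTop sqrt_tendsto_atTop

private lemma term2_tendsto :
    Tendsto (fun d : ℝ => (d + 1) * Real.sqrt (2 * d + 1)
      / (Real.sqrt (1 + d ^ 2) * Real.sqrt (2 * d))) atTop (nhds 1) := by
  have h0 : Tendsto (fun d : ℝ => d⁻¹) atTop (nhds 0) := tendsto_inv_atTop_zero
  have h1 : Tendsto (fun d : ℝ => ((1 + d⁻¹) ^ 2 * (2 + d⁻¹)) / ((d⁻¹ ^ 2 + 1) * 2)) atTop
      (nhds (((1 + 0) ^ 2 * (2 + 0)) / ((0 ^ 2 + 1) * 2))) :=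
    Tendsto.div (((tendsto_const_nhds.add h0).pow 2).mul (tendsto_const_nhds.add h0))
      (((h0.pow 2).add tendsto_const_nhds).mul tendsto_const_nhds) (by norm_num)
  have h1' : Tendsto (fun d : ℝ => ((1 + d⁻¹) ^ 2 * (2 + d⁻¹)) / ((d⁻¹ ^ 2 + 1) * 2)) atTop
      (nhds 1) := by
    convert h1 using 2
    norm_num
  have h2 : ∀ᶠ d : ℝ in atTop,
      ((1 + d⁻¹) ^ 2 * (2 + d⁻¹)) / ((d⁻¹ ^ 2 + 1) * 2)
        = ((d + 1) ^ 2 * (2 * d + 1)) / ((1 + d ^ 2) * (2 * d)) := by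
    filter_upwards [eventually_ge_atTop (1 : ℝ)] with d hd
    have hd0 : d ≠ 0 := by positivity
    have hden : (1 : ℝ) + d ^ 2 ≠ 0 := by positivity
    field_simp
  have h3 : Tendsto (fun d : ℝ => ((d + 1) ^ 2 * (2 * d + 1)) / ((1 + d ^ 2) * (2 * d)))
      atTop (nhds 1) := h1'.congr' h2
  have h4 := h3.sqrt
  rw [Real.sqrt_one] at h4
  refine h4.congr' ?_
  filter_upwards [eventually_ge_atTop (1 : ℝ)] with d hd
  rw [Real.sqrt_div (by positivity), Real.sqrt_mul (by positivity),
    Real.sqrt_mul (by positivity), Real.sqrt_sq (by linarith)]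

private lemma term1_tendsto :
    Tendsto (fun d : ℝ => (d + 1) * (Real.sqrt (1 + (d + 1) ^ 2) - Real.sqrt (1 + d ^ 2))
      / (Real.sqrt (1 + d ^ 2) * Real.sqrt (2 * d))) atTop (nhds 0) := by
  refine tendsto_of_tendsto_of_tendsto_of_le_of_le' tendsto_const_nhds two_div_sqrt_tendsto ?_ ?_
  · filter_upwards [eventually_ge_atTop (1 : ℝ)] with d hd
    have hAC : Real.sqrt (1 + d ^ 2) ≤ Real.sqrt (1 + (d + 1) ^ 2) :=
      Real.sqrt_le_sqrt (by nlinarith)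
    have h1 : (0:ℝ) ≤ Real.sqrt (1 + d ^ 2) := Real.sqrt_nonneg _
    have h2 : (0:ℝ) ≤ Real.sqrt (2 * d) := Real.sqrt_nonneg _
    exact div_nonneg (mul_nonneg (by linarith) (by linarith)) (mul_nonneg h1 h2)
  · filter_upwards [eventually_ge_atTop (1 : ℝ)] with d hd
    set A := Real.sqrt (1 + (d + 1) ^ 2) with hA
    set C := Real.sqrt (1 + d ^ 2) with hC
    set s := Real.sqrt d with hs
    set t := Real.sqrt (2 * d) with ht
    have hA2 : A ^ 2 = 1 + (d + 1) ^ 2 := Real.sq_sqrt (by nlinarith)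
    have hC2 : C ^ 2 = 1 + d ^ 2 := Real.sq_sqrt (by nlinarith)
    have hs2 : s ^ 2 = d := Real.sq_sqrt (by linarith)
    have ht2 : t ^ 2 = 2 * d := Real.sq_sqrt (by linarith)
    have hA0 : 0 ≤ A := Real.sqrt_nonneg _
    have hC0 : 0 ≤ C := Real.sqrt_nonneg _
    have hs0 : 0 ≤ s := Real.sqrt_nonneg _
    have ht0 : 0 ≤ t := Real.sqrt_nonneg _
    have hA1 : d + 1 ≤ A := by
      have := Real.sqrt_le_sqrt (show (d + 1) ^ 2 ≤ 1 + (d + 1) ^ 2 by linarith)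
      rwa [Real.sqrt_sq (by linarith)] at this
    have hC1 : d ≤ C := by
      have := Real.sqrt_le_sqrt (show d ^ 2 ≤ 1 + d ^ 2 by linarith)
      rwa [Real.sqrt_sq (by linarith)] at this
    have hs1 : 1 ≤ s := by
      have := Real.sqrt_le_sqrt (show (1:ℝ) ≤ d from hd)
      rwa [Real.sqrt_one] at this
    have hts : s ≤ t := Real.sqrt_le_sqrt (by linarith)
    have hACle : C ≤ A := by nlinarith
    have hACd : (A - C) * (A + C) = 2 * d + 1 := by nlinarith
    have haux : (A - C) * (2 * d + 1) ≤ (A - C) * (A + C) :=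
      mul_le_mul_of_nonneg_left (by linarith) (by linarith)
    have hAC1 : A - C ≤ 1 := by nlinarith
    have hCpos : (0:ℝ) < C := by linarith
    have hspos : (0:ℝ) < s := by linarith
    have htpos : (0:ℝ) < t := by linarith
    rw [div_le_div_iff₀ (by positivity) hspos]
    have key1 : (A - C) * ((d + 1) * s) ≤ 1 * ((d + 1) * s) :=
      mul_le_mul_of_nonneg_right hAC1 (by positivity)
    have key2 : d * s ≤ C * t := mul_le_mul hC1 hts hs0 hC0
    have key3 : (d + 1) * s ≤ 2 * d * s :=
      mul_le_mul_of_nonneg_right (by linarith) hs0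
    nlinarith

private lemma sqrt2d_div_tendsto :
    Tendsto (fun d : ℝ => Real.sqrt (2 * d) / (d + 1)) atTop (nhds 0) := by
  refine tendsto_of_tendsto_of_tendsto_of_le_of_le' tendsto_const_nhds two_div_sqrt_tendsto ?_ ?_
  · filter_upwards [eventually_ge_atTop (1 : ℝ)] with d hd
    exact div_nonneg (Real.sqrt_nonneg _) (by linarith)
  · filter_upwards [eventually_ge_atTop (1 : ℝ)] with d hd
    have hspos : (0:ℝ) < Real.sqrt d := Real.sqrt_pos.mpr (by linarith)
    rw [div_le_div_iff₀ (by linarith) hspos]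
    have h1 : Real.sqrt (2 * d) * Real.sqrt d = Real.sqrt (2 * d * d) :=
      (Real.sqrt_mul (by linarith) d).symm
    have h2 : Real.sqrt (2 * d * d) ≤ Real.sqrt ((2 * (d + 1)) ^ 2) :=
      Real.sqrt_le_sqrt (by nlinarith)
    rw [Real.sqrt_sq (by linarith)] at h2
    linarith [h1 ▸ h2]

private noncomputable def rr (d : ℝ) : ℝ :=
  (Real.sqrt (1 + (d + 1) ^ 2) + Real.sqrt (2 * d + 1)) / Real.sqrt (1 + d ^ 2)

private noncomputable def FF (d : ℝ) : ℝ :=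
  (d + 1) * (Real.sqrt (1 + (d + 1) ^ 2) + Real.sqrt (2 * d + 1) - Real.sqrt (1 + d ^ 2))
    / (Real.sqrt (1 + d ^ 2) * Real.sqrt (2 * d))

private lemma FF_tendsto : Tendsto FF atTop (nhds 1) := by
  have h := term1_tendsto.add term2_tendsto
  rw [zero_add] at h
  refine h.congr fun d => ?_
  unfold FF
  ring

private lemma rr_basic (d : ℝ) (hd : 1 ≤ d) :
    0 < Real.sqrt (1 + d ^ 2) ∧ 0 < Real.sqrt (2 * d) ∧ 0 < Real.sqrt (2 * d + 1) ∧
      Real.sqrt (1 + d ^ 2) ≤ Real.sqrt (1 + (d + 1) ^ 2) :=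
  ⟨Real.sqrt_pos.mpr (by positivity), Real.sqrt_pos.mpr (by linarith),
    Real.sqrt_pos.mpr (by linarith), Real.sqrt_le_sqrt (by nlinarith)⟩

private lemma rr_tendsto : Tendsto rr atTop (nhds 1) := by
  have h := (tendsto_const_nhds : Tendsto (fun _ : ℝ => (1:ℝ)) atTop (nhds 1)).add
    (FF_tendsto.mul sqrt2d_div_tendsto)
  rw [mul_zero, add_zero] at h
  refine h.congr' ?_
  filter_upwards [eventually_ge_atTop (1 : ℝ)] with d hd
  obtain ⟨hC0, ht0, hB0, hCA⟩ := rr_basic d hd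
  unfold FF rr
  field_simp
  ring

private lemma rr_gt_one : ∀ᶠ d : ℝ in atTop, 1 < rr d := by
  filter_upwards [eventually_ge_atTop (1 : ℝ)] with d hd
  obtain ⟨hC0, ht0, hB0, hCA⟩ := rr_basic d hd
  rw [rr, lt_div_iff₀ hC0]
  linarith

theorem catenoid_I1_asymptotic :
    Tendsto (fun d : ℝ =>
        ((d + 1) * Real.log ((Real.sqrt (1 + (d + 1) ^ 2) + Real.sqrt (2 * d + 1))
          / Real.sqrt (1 + d ^ 2))) / Real.sqrt (2 * d))
      atTop (nhds 1) := by
  have hrW : Tendsto rr atTop (nhdsWithin 1 {(1:ℝ)}ᶜ) := by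
    rw [tendsto_nhdsWithin_iff]
    exact ⟨rr_tendsto, rr_gt_one.mono fun d h => by simp [ne_of_gt h]⟩
  have hlog : Tendsto (fun y : ℝ => Real.log y / (y - 1)) (nhdsWithin 1 {(1:ℝ)}ᶜ)
      (nhds 1) := by
    have h := hasDerivAt_iff_tendsto_slope.mp (Real.hasDerivAt_log one_ne_zero)
    rw [inv_one] at h
    refine h.congr fun y => ?_
    rw [slope_def_field, Real.log_one, sub_zero]
  have hcomp : Tendsto (fun d : ℝ => Real.log (rr d) / (rr d - 1)) atTop (nhds 1) :=
    hlog.comp hrW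
  have hmul := hcomp.mul FF_tendsto
  rw [mul_one] at hmul
  refine hmul.congr' ?_
  filter_upwards [eventually_ge_atTop (1 : ℝ), rr_gt_one] with d hd hrd
  obtain ⟨hC0, ht0, hB0, hCA⟩ := rr_basic d hd
  have hne : rr d - 1 ≠ 0 := sub_ne_zero.mpr (ne_of_gt hrd)
  have key : Real.sqrt (1 + (d + 1) ^ 2) + Real.sqrt (2 * d + 1) - Real.sqrt (1 + d ^ 2)
      = (rr d - 1) * Real.sqrt (1 + d ^ 2) := by
    rw [rr]
    field_simp
  rw [show (Real.sqrt (1 + (d + 1) ^ 2) + Real.sqrt (2 * d + 1)) / Real.sqrt (1 + d ^ 2)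
      = rr d from rfl]
  rw [FF, key]
  field_simp
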